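/- Let A be a k-th order almost symmetric tensor on R^n, B ∈ R^{n×m}, C ∈ R^{l×n}, and let A_red, B_red = V^T B, C_red = C V be the reduced system obtained via compact HOSVD with factor V ∈ R^{n×r} having orthonormal columns. If x(t) solves ẋ = A x^{k-1} + B u(t) and x(t) ∈ range(V) for all t, then z(t) = V^T x(t) solves ż = A_red z^{k-1} + B_red u(t) and the outputs coincide: C x(t) = C_red z(t). -/

import Mathlib

open Finset

/-- For a `(k+1)`-th order tensor `A` (first `k` modes of dimension `m`, last mode of
dimension `m'`), the contraction `A ×₁ x ⋯ ×ₖ x` along the first `k` modes. -/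
def tvp {m m' k : ℕ} (A : (Fin k → Fin m) → Fin m' → ℝ) (x : Fin m → ℝ) : Fin m' → ℝ :=
  fun i => ∑ j : Fin k → Fin m, A j i * ∏ p, x (j p)

/-- Key algebraic identity: contracting the projection of `tvp A y` equals the
contraction of the reduced tensor against the reduced vector. -/
lemma tvp_reduce {n r rk k : ℕ}
    (A : (Fin k → Fin n) → Fin n → ℝ)
    (S : (Fin k → Fin r) → Fin rk → ℝ)
    (V : Fin n → Fin r → ℝ) (Vk : Fin n → Fin rk → ℝ)
    (hA : ∀ j i, A j i = ∑ s : Fin k → Fin r, ∑ sk : Fin rk,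
        S s sk * (∏ p, V (j p) (s p)) * Vk i sk)
    (y : Fin n → ℝ) (b : Fin r) :
    ∑ a, V a b * tvp A y a
      = tvp (fun s b' => ∑ sk, S s sk * ∑ a, V a b' * Vk a sk)
          (fun c => ∑ a, V a c * y a) b := by
  simp only [tvp, hA]
  have hprod : ∀ s : Fin k → Fin r,
      (∏ p, ∑ a, V a (s p) * y a)
        = ∑ j : Fin k → Fin n, (∏ p, V (j p) (s p)) * ∏ p, y (j p) := by
    intro s
    rw [Finset.prod_univ_sum]
    simp [Fintype.piFinset_univ, Finset.prod_mul_distrib]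
  simp only [hprod]
  simp only [Finset.sum_mul, Finset.mul_sum]
  conv_rhs => enter [2, s, 2, j]; rw [Finset.sum_comm]
  conv_rhs => enter [2, s]; rw [Finset.sum_comm]
  conv_rhs => rw [Finset.sum_comm]
  conv_rhs => enter [2, a]; rw [Finset.sum_comm]
  conv_rhs => rw [Finset.sum_comm]
  rw [Finset.sum_comm]
  apply Finset.sum_congr rfl; intro j _
  apply Finset.sum_congr rfl; intro a _
  apply Finset.sum_congr rfl; intro s _
  apply Finset.sum_congr rfl; intro sk _
  ring

/-- Let `A` be a `(k+1)`-th order almost symmetric tensor on `ℝ^n`, `B ∈ ℝ^{n×m}`,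
`C ∈ ℝ^{l×n}`, and let `A_red = S_red ×_{k+1} (Vᵀ V_k)`, `B_red = Vᵀ B`, `C_red = C V`
be the reduced system obtained via the compact HOSVD
`A = S_red ×₁ V ⋯ ×ₖ V ×_{k+1} V_k` with `V` having orthonormal columns.  If `x(t)`
solves `ẋ = A x^k + B u(t)` and `x(t) ∈ range(V)` for all `t` (i.e. `V Vᵀ x = x`),
then `z(t) = Vᵀ x(t)` solves `ż = A_red z^k + B_red u(t)` and the outputs coincide:
`C x(t) = C_red z(t)`. -/
theorem hosvd_reduced_io_system {n r rk k m l : ℕ}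
    (A : (Fin k → Fin n) → Fin n → ℝ)
    (halmost : ∀ σ : Equiv.Perm (Fin k), ∀ j i, A (j ∘ σ) i = A j i)
    (S : (Fin k → Fin r) → Fin rk → ℝ)
    (V : Fin n → Fin r → ℝ) (Vk : Fin n → Fin rk → ℝ)
    (hV : ∀ b c : Fin r, ∑ a, V a b * V a c = if b = c then (1 : ℝ) else 0)
    (hA : ∀ j i, A j i = ∑ s : Fin k → Fin r, ∑ sk : Fin rk,
        S s sk * (∏ p, V (j p) (s p)) * Vk i sk)
    (B : Fin n → Fin m → ℝ) (C : Fin l → Fin n → ℝ)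
    (u : ℝ → Fin m → ℝ) (x : ℝ → Fin n → ℝ)
    (hdyn : ∀ t a, HasDerivAt (fun s => x s a)
        (tvp A (x t) a + ∑ q, B a q * u t q) t)
    (hrange : ∀ t a, (∑ b : Fin r, V a b * ∑ a', V a' b * x t a') = x t a) :
    (∀ t b, HasDerivAt (fun s => ∑ a, V a b * x s a)
        (tvp (fun s b' => ∑ sk, S s sk * ∑ a, V a b' * Vk a sk)
            (fun c => ∑ a, V a c * x t a) b
          + ∑ q, (∑ a, V a b * B a q) * u t q) t) ∧
    (∀ t c, ∑ a, C c a * x t a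
        = ∑ b, (∑ a, C c a * V a b) * ∑ a, V a b * x t a) := by
  constructor
  · intro t b
    have h1 : HasDerivAt (fun s => ∑ a, V a b * x s a)
        (∑ a, V a b * (tvp A (x t) a + ∑ q, B a q * u t q)) t := by
      exact HasDerivAt.fun_sum fun a _ => (hdyn t a).const_mul (V a b)
    have h2 : (∑ a, V a b * (tvp A (x t) a + ∑ q, B a q * u t q))
        = tvp (fun s b' => ∑ sk, S s sk * ∑ a, V a b' * Vk a sk)
            (fun c => ∑ a, V a c * x t a) b
          + ∑ q, (∑ a, V a b * B a q) * u t q := by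
      rw [← tvp_reduce A S V Vk hA (x t) b]
      simp only [mul_add, Finset.sum_add_distrib]
      congr 1
      calc ∑ a, V a b * ∑ q, B a q * u t q
          = ∑ a, ∑ q, V a b * (B a q * u t q) := by
            apply Finset.sum_congr rfl; intro a _; rw [Finset.mul_sum]
        _ = ∑ q, ∑ a, V a b * (B a q * u t q) := Finset.sum_comm
        _ = ∑ q, (∑ a, V a b * B a q) * u t q := by
            apply Finset.sum_congr rfl; intro q _
            rw [Finset.sum_mul]
            apply Finset.sum_congr rfl; intro a _; ring
    rwa [h2] at h1
  · intro t c
    symm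
    calc ∑ b, (∑ a, C c a * V a b) * ∑ a, V a b * x t a
        = ∑ b, ∑ a, C c a * (V a b * ∑ a', V a' b * x t a') := by
          apply Finset.sum_congr rfl; intro b _
          rw [Finset.sum_mul]
          apply Finset.sum_congr rfl; intro a _; ring
      _ = ∑ a, ∑ b, C c a * (V a b * ∑ a', V a' b * x t a') := Finset.sum_comm
      _ = ∑ a, C c a * x t a := by
          apply Finset.sum_congr rfl; intro a _
          rw [← Finset.mul_sum, hrange]
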